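/- Let M be a matroid with a triangle T = {a,b,c}, and let (X_a, Y_a) and (X_b, Y_b) be exact vertical 3-separations of M \ a and M \ b, respectively, with b ∈ X_a and a ∈ X_b. Then λ_{M\{a,b}}(Y_a ∩ Y_b) + λ_{M\{a,b}}(X_a ∩ X_b) ≤ 4, and λ_{M\{a,b}}(X_a ∩ Y_b) + λ_{M\{a,b}}(X_b ∩ Y_a) ≤ 4. -/

import Mathlib

open Set Matroid

universe u

variable {α : Type u}

/-- The rank of a set `X` in a matroid `M`: the supremum of the cardinalities of the
independent subsets of `X`. -/
noncomputable def mrk (M : Matroid α) (X : Set α) : ℕ∞ :=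
  ⨆ I ∈ {I : Set α | M.Indep I ∧ I ⊆ X}, I.encard

/-- The rank `r(M)` of a matroid `M`. -/
noncomputable def mrank (M : Matroid α) : ℕ∞ := mrk M M.E

/-- The connectivity function `λ_M(X) = r(X) + r(E(M) - X) - r(M)`. -/
noncomputable def lam (M : Matroid α) (X : Set α) : ℕ∞ :=
  mrk M X + mrk M (M.E \ X) - mrank M

/-- The deletion `M \ D` of a set of elements `D` from `M`. -/
def mdel (M : Matroid α) (D : Set α) : Matroid α := M ↾ (M.E \ D)

/-- A circuit of a matroid: a minimal dependent set. -/
def MCircuit (M : Matroid α) (C : Set α) : Prop := M.Dep C ∧ ∀ D, D ⊂ C → M.Indep D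

/-- A cocircuit of a matroid: a circuit of the dual matroid. -/
def MCocircuit (M : Matroid α) (C : Set α) : Prop := MCircuit M✶ C

/-- A triangle: a 3-element circuit. -/
def IsTriangle (M : Matroid α) (T : Set α) : Prop := MCircuit M T ∧ T.encard = 3

/-- `(X, Y)` is a vertical `j`-separation of `M`: a partition of `E(M)` with
`λ_M(X) < j` and `min {r(X), r(Y)} ≥ j`. -/
def IsVSep (M : Matroid α) (j : ℕ) (X Y : Set α) : Prop :=
  X ∪ Y = M.E ∧ Disjoint X Y ∧ lam M X < (j : ℕ∞) ∧
    (j : ℕ∞) ≤ mrk M X ∧ (j : ℕ∞) ≤ mrk M Y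

/-- An exact vertical `j`-separation: one with `λ_M(X) = j - 1`. -/
def IsExactVSep (M : Matroid α) (j : ℕ) (X Y : Set α) : Prop :=
  IsVSep M j X Y ∧ lam M X = (j : ℕ∞) - 1

/-- `M` is vertically `k`-connected: it has no vertical `j`-separation for a
positive integer `j < k`. -/
def VertConn (M : Matroid α) (k : ℕ) : Prop :=
  ∀ j X Y, 0 < j → j < k → ¬ IsVSep M j X Y

/-- `(X, Y)` is a (Tutte) `j`-separation of `M`. -/
def IsSep (M : Matroid α) (j : ℕ) (X Y : Set α) : Prop :=
  X ∪ Y = M.E ∧ Disjoint X Y ∧ lam M X < (j : ℕ∞) ∧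
    (j : ℕ∞) ≤ X.encard ∧ (j : ℕ∞) ≤ Y.encard

/-- `M` is (Tutte) `k`-connected. -/
def TConn (M : Matroid α) (k : ℕ) : Prop :=
  ∀ j X Y, 0 < j → j < k → ¬ IsSep M j X Y

/-- `M` is minimally vertically 4-connected. -/
def MinVertConn4 (M : Matroid α) : Prop :=
  VertConn M 4 ∧ ∀ e ∈ M.E, ¬ VertConn (mdel M {e}) 4

/-- `M` is a simple matroid: every subset of the ground set with at most two
elements is independent (no loops and no parallel pairs). -/
def MSimple (M : Matroid α) : Prop := ∀ S ⊆ M.E, S.encard ≤ 2 → M.Indep S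

/-- `M` has a restriction isomorphic to `U_{2,4}`: a 4-element subset of the ground set
of rank 2, all of whose subsets with at most 2 elements are independent. -/
def HasU24Restriction (M : Matroid α) : Prop :=
  ∃ X ⊆ M.E, X.encard = 4 ∧ mrk M X = 2 ∧ ∀ S ⊆ X, S.encard ≤ 2 → M.Indep S

/-- The restriction `M|X` is isomorphic to `U_{2,4}`. -/
def RestrIsoU24 (M : Matroid α) (X : Set α) : Prop :=
  X ⊆ M.E ∧ X.encard = 4 ∧ mrk M X = 2 ∧ ∀ S ⊆ X, S.encard ≤ 2 → M.Indep S

/-- The restriction `M|C` is isomorphic to `U_{2,k} ⊕ U_{2,2}`: `C` is the disjoint union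
of a `k`-element rank-2 set `L` containing no loops or parallel pairs (a copy of `U_{2,k}`)
and a 2-element independent set `P` (a copy of `U_{2,2}`), with `r(C) = r(L) + r(P) = 4`,
so that the restriction is the direct sum of the two pieces. -/
def RestrIsoLinePlusPair (M : Matroid α) (C : Set α) (k : ℕ) : Prop :=
  ∃ L P, C = L ∪ P ∧ Disjoint L P ∧ L.encard = (k : ℕ∞) ∧ P.encard = 2 ∧
    M.Indep P ∧ mrk M L = 2 ∧ (∀ S ⊆ L, S.encard ≤ 2 → M.Indep S) ∧ mrk M C = 4

/-- The restriction `M|X` is isomorphic to the 2-sum `U_{2,4} ⊕₂ U_{2,4}`: `X` is the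
disjoint union of two 3-element circuits `T₁` and `T₂`, and the circuits of `M` contained
in `X` (i.e. the circuits of `M|X`) are exactly `T₁`, `T₂`, and the unions `P₁ ∪ P₂` of
2-element subsets `P₁ ⊆ T₁` and `P₂ ⊆ T₂`. -/
def RestrIsoTwoSumU24U24 (M : Matroid α) (X : Set α) : Prop :=
  X ⊆ M.E ∧ ∃ T₁ T₂ : Set α, Disjoint T₁ T₂ ∧ X = T₁ ∪ T₂ ∧
    T₁.encard = 3 ∧ T₂.encard = 3 ∧
    ∀ C ⊆ X, (MCircuit M C ↔ (C = T₁ ∨ C = T₂ ∨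
      ∃ P₁ P₂, P₁ ⊆ T₁ ∧ P₂ ⊆ T₂ ∧ P₁.encard = 2 ∧ P₂.encard = 2 ∧ C = P₁ ∪ P₂))

/-- The columns of the `GF(3)`-matrix representing `N₉`. -/
def N9Cols : Fin 9 → Fin 4 → ZMod 3 :=
  ![![1, 0, 0, 0], ![0, 1, 0, 0], ![0, 0, 1, 0], ![0, 0, 0, 1], ![0, 1, 1, -1],
    ![1, 0, 1, 1], ![1, 1, 0, 1], ![-1, 1, 1, 0], ![1, -1, 1, -1]]

/-- `M` is isomorphic to `N₉`, the 9-element rank-4 matroid represented over `GF(3)`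
by the matrix with columns `N9Cols`. -/
def IsoN9 (M : Matroid α) : Prop :=
  ∃ φ : α → Fin 9, Set.BijOn φ M.E Set.univ ∧
    ∀ I ⊆ M.E, (M.Indep I ↔ LinearIndependent (ZMod 3) fun x : I => N9Cols (φ x.1))

/-- `M` is binary: representable over the two-element field `GF(2)`, i.e. there is a
map from the ground set to a `GF(2)`-vector space under which independence in `M`
coincides with linear independence. -/
def IsBinary (M : Matroid α) : Prop :=
  ∃ (ι : Type u) (φ : α → ι → ZMod 2),
    ∀ I ⊆ M.E, (M.Indep I ↔ LinearIndependent (ZMod 2) fun x : I => φ x.1)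

/-- `M` is a uniform matroid, i.e. isomorphic to `U_{m,n}` for some `m` and `n`:
the ground set has `n` elements and a subset of the ground set is independent
exactly when it has at most `m` elements. -/
def IsUniform (M : Matroid α) : Prop :=
  ∃ m n : ℕ, M.E.encard = (n : ℕ∞) ∧ ∀ I ⊆ M.E, (M.Indep I ↔ I.encard ≤ (m : ℕ∞))


section AuxLemmas

lemma le_mrk {M : Matroid α} {I X : Set α} (hI : M.Indep I) (hIX : I ⊆ X) :
    I.encard ≤ mrk M X := le_biSup _ ⟨hI, hIX⟩

lemma mrk_mono (M : Matroid α) {X Y : Set α} (h : X ⊆ Y) : mrk M X ≤ mrk M Y :=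
  iSup₂_le fun _ hI => le_mrk hI.1 (hI.2.trans h)

lemma basis'_mrk {M : Matroid α} {I X : Set α} (hI : M.IsBasis' I X) : mrk M X = I.encard := by
  refine le_antisymm (iSup₂_le fun J hJ => ?_) (le_mrk hI.indep hI.subset)
  obtain ⟨hJi, hJX⟩ := hJ
  obtain ⟨B, hB, hJB⟩ := (restrict_indep_iff.2 ⟨hJi, hJX⟩ :
    (M ↾ X).Indep J).exists_isBase_superset
  exact (Set.encard_mono hJB).trans (hB.encard_eq_encard_of_isBase (isBase_restrict_iff'.2 hI)).le

lemma mrk_restrict (M : Matroid α) (R X : Set α) : mrk (M ↾ R) X = mrk M (X ∩ R) := by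
  refine le_antisymm (iSup₂_le fun I hI => ?_) (iSup₂_le fun I hI => ?_)
  · have h := restrict_indep_iff.1 hI.1
    exact le_mrk h.1 (subset_inter hI.2 h.2)
  · exact le_mrk (M := M ↾ R) (restrict_indep_iff.2 ⟨hI.1, hI.2.trans inter_subset_right⟩)
      (hI.2.trans inter_subset_left)

lemma mrk_submod (M : Matroid α) (A B : Set α) :
    mrk M (A ∪ B) + mrk M (A ∩ B) ≤ mrk M A + mrk M B := by
  obtain ⟨I, hI⟩ := M.exists_isBasis' (A ∩ B)
  obtain ⟨J, hJ, hIJ⟩ := hI.indep.subset_isBasis'_of_subset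
    (hI.subset.trans (inter_subset_left.trans subset_union_left))
  rw [basis'_mrk hI, basis'_mrk hJ]
  calc J.encard + I.encard
      ≤ (J ∩ (A ∪ B)).encard + (J ∩ (A ∩ B)).encard := by
        rw [inter_eq_self_of_subset_left hJ.subset]
        exact add_le_add_right (Set.encard_mono (subset_inter hIJ hI.subset)) _
    _ = ((J ∩ A) ∪ (J ∩ B)).encard + ((J ∩ A) ∩ (J ∩ B)).encard := by
        rw [inter_union_distrib_left, inter_inter_distrib_left]
    _ = (J ∩ A).encard + (J ∩ B).encard := Set.encard_union_add_encard_inter _ _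
    _ ≤ mrk M A + mrk M B := add_le_add
        (le_mrk (hJ.indep.subset inter_subset_left) inter_subset_right)
        (le_mrk (hJ.indep.subset inter_subset_left) inter_subset_right)

lemma mrk_union_le (M : Matroid α) (A B : Set α) : mrk M (A ∪ B) ≤ mrk M A + mrk M B :=
  le_trans le_self_add (mrk_submod M A B)

lemma lam_mdel (M : Matroid α) (D X : Set α) (hX : X ⊆ M.E \ D) :
    lam (mdel M D) X = mrk M X + mrk M ((M.E \ D) \ X) - mrk M (M.E \ D) := by
  simp only [lam, mdel, mrank, mrk_restrict, restrict_ground_eq,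
    inter_eq_self_of_subset_left hX, inter_self,
    inter_eq_self_of_subset_left (diff_subset (s := M.E \ D) (t := X))]

lemma key_arith {xa ya xb yb ea eb g xa' xb' p q u v : ℕ∞}
    (hg : g ≠ ⊤) (hea : ea ≠ ⊤) (heb : eb ≠ ⊤)
    (hxa : xa ≤ ea) (hya : ya ≤ ea) (hxb : xb ≤ eb) (hyb : yb ≤ eb)
    (hxa' : xa' ≤ g) (hxb' : xb' ≤ g) (hp : p ≤ g) (hq : q ≤ g) (hu : u ≤ g) (hv : v ≤ g)
    (H1 : xa + ya - ea = 2) (H2 : xb + yb - eb = 2)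
    (S7 : ea ≤ xa + ya) (S8 : eb ≤ xb + yb)
    (S1 : ea + xa' ≤ xa + g) (S2 : eb + xb' ≤ xb + g)
    (S34 : p + u + (q + v) ≤ ya + yb + (xa' + xb'))
    (Sg1 : g ≤ p + v) (Sg2 : g ≤ q + u) :
    (p + v - g) + (q + u - g) ≤ 4 := by
  have hxaT := ne_top_of_le_ne_top hea hxa
  have hyaT := ne_top_of_le_ne_top hea hya
  have hxbT := ne_top_of_le_ne_top heb hxb
  have hybT := ne_top_of_le_ne_top heb hyb
  have hxa'T := ne_top_of_le_ne_top hg hxa'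
  have hxb'T := ne_top_of_le_ne_top hg hxb'
  have hpT := ne_top_of_le_ne_top hg hp
  have hqT := ne_top_of_le_ne_top hg hq
  have huT := ne_top_of_le_ne_top hg hu
  have hvT := ne_top_of_le_ne_top hg hv
  lift g to ℕ using hg
  lift ea to ℕ using hea
  lift eb to ℕ using heb
  lift xa to ℕ using hxaT
  lift ya to ℕ using hyaT
  lift xb to ℕ using hxbT
  lift yb to ℕ using hybT
  lift xa' to ℕ using hxa'T
  lift xb' to ℕ using hxb'T
  lift p to ℕ using hpT
  lift q to ℕ using hqT
  lift u to ℕ using huT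
  lift v to ℕ using hvT
  have h1 : xa + ya - ea = 2 := by exact_mod_cast H1
  have h2 : xb + yb - eb = 2 := by exact_mod_cast H2
  have s7 : ea ≤ xa + ya := by exact_mod_cast S7
  have s8 : eb ≤ xb + yb := by exact_mod_cast S8
  have s1 : ea + xa' ≤ xa + g := by exact_mod_cast S1
  have s2 : eb + xb' ≤ xb + g := by exact_mod_cast S2
  have s34 : p + u + (q + v) ≤ ya + yb + (xa' + xb') := by exact_mod_cast S34
  have sg1 : g ≤ p + v := by exact_mod_cast Sg1
  have sg2 : g ≤ q + u := by exact_mod_cast Sg2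
  have : (p + v - g) + (q + u - g) ≤ 4 := by omega
  exact_mod_cast this

end AuxLemmas

set_option maxHeartbeats 2000000 in
/-- In the setting of the technical lemma (for an arbitrary matroid `M`), the uncrossing
inequalities for the connectivity function of `M \ {a,b}` hold. -/
theorem statement_11 (M : Matroid α) (a b c : α) (hT : IsTriangle M {a, b, c})
    (Xa Ya Xb Yb : Set α)
    (ha : IsExactVSep (mdel M {a}) 3 Xa Ya) (hb : IsExactVSep (mdel M {b}) 3 Xb Yb)
    (hbXa : b ∈ Xa) (haXb : a ∈ Xb) :
    lam (mdel M {a, b}) (Ya ∩ Yb) + lam (mdel M {a, b}) (Xa ∩ Xb) ≤ 4 ∧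
    lam (mdel M {a, b}) (Xa ∩ Yb) + lam (mdel M {a, b}) (Xb ∩ Ya) ≤ 4 := by
  clear hT
  obtain ⟨⟨hUa, hDa, -, -, -⟩, hLa⟩ := ha
  obtain ⟨⟨hUb, hDb, -, -, -⟩, hLb⟩ := hb
  simp only [mdel, restrict_ground_eq] at hUa hUb
  set E := M.E with hE
  set G := E \ ({a, b} : Set α) with hG
  have hXaE : Xa ⊆ E \ {a} := hUa ▸ subset_union_left
  have hYaE : Ya ⊆ E \ {a} := hUa ▸ subset_union_right
  have hXbE : Xb ⊆ E \ {b} := hUb ▸ subset_union_left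
  have hYbE : Yb ⊆ E \ {b} := hUb ▸ subset_union_right
  have hdA : ∀ x, x ∈ Xa → x ∉ Ya := fun x h => Set.disjoint_left.mp hDa h
  have hdB : ∀ x, x ∈ Xb → x ∉ Yb := fun x h => Set.disjoint_left.mp hDb h
  have hmemA : ∀ x, x ∈ Xa ∨ x ∈ Ya ↔ x ∈ E ∧ x ≠ a := by
    intro x; rw [← mem_union, hUa]; simp [mem_diff]
  have hmemB : ∀ x, x ∈ Xb ∨ x ∈ Yb ↔ x ∈ E ∧ x ≠ b := by
    intro x; rw [← mem_union, hUb]; simp [mem_diff]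
  have hXa' : ∀ x, x ∈ Xa → x ∈ E ∧ x ≠ a := fun x h => by simpa [mem_diff] using hXaE h
  have hYa' : ∀ x, x ∈ Ya → x ∈ E ∧ x ≠ a := fun x h => by simpa [mem_diff] using hYaE h
  have hXb' : ∀ x, x ∈ Xb → x ∈ E ∧ x ≠ b := fun x h => by simpa [mem_diff] using hXbE h
  have hYb' : ∀ x, x ∈ Yb → x ∈ E ∧ x ≠ b := fun x h => by simpa [mem_diff] using hYbE h
  have hbmem : ∀ x : α, x = b → x ∈ Xa := fun x h => h ▸ hbXa
  have hamem : ∀ x : α, x = a → x ∈ Xb := fun x h => h ▸ haXb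
  -- subset facts
  have hbYa : b ∉ Ya := hdA b hbXa
  have haYb : a ∉ Yb := hdB a haXb
  have sYa : Ya ⊆ G := by
    intro x hx
    refine ⟨(hYa' x hx).1, ?_⟩
    simp only [mem_insert_iff, mem_singleton_iff]
    rintro (rfl | rfl)
    · exact (hYa' x hx).2 rfl
    · exact hbYa hx
  have sYb : Yb ⊆ G := by
    intro x hx
    refine ⟨(hYb' x hx).1, ?_⟩
    simp only [mem_insert_iff, mem_singleton_iff]
    rintro (rfl | rfl)
    · exact haYb hx
    · exact (hYb' x hx).2 rfl
  have sXa' : Xa \ {b} ⊆ G := by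
    intro x hx
    refine ⟨(hXa' x hx.1).1, ?_⟩
    simp only [mem_insert_iff, mem_singleton_iff]
    rintro (rfl | rfl)
    · exact (hXa' x hx.1).2 rfl
    · exact hx.2 rfl
  have sXb' : Xb \ {a} ⊆ G := by
    intro x hx
    refine ⟨(hXb' x hx.1).1, ?_⟩
    simp only [mem_insert_iff, mem_singleton_iff]
    rintro (rfl | rfl)
    · exact hx.2 rfl
    · exact (hXb' x hx.1).2 rfl
  -- set identities
  have e1 : (E \ {a}) \ Xa = Ya := by
    ext x
    have h1 := hmemA x; have h2 := hdA x; have h3 := hYa' x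
    simp only [mem_diff, mem_singleton_iff]
    tauto
  have e2 : (E \ {b}) \ Xb = Yb := by
    ext x
    have h1 := hmemB x; have h2 := hdB x; have h3 := hYb' x
    simp only [mem_diff, mem_singleton_iff]
    tauto
  have e3 : Xa ∪ G = E \ {a} := by
    ext x
    have h1 := hXa' x; have h2 := hbmem x
    simp only [hG, mem_union, mem_diff, mem_singleton_iff, mem_insert_iff]
    tauto
  have e4 : Xa ∩ G = Xa \ {b} := by
    ext x
    have h1 := hXa' x
    simp only [hG, mem_inter_iff, mem_diff, mem_singleton_iff, mem_insert_iff]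
    tauto
  have e5 : Xb ∪ G = E \ {b} := by
    ext x
    have h1 := hXb' x; have h2 := hamem x
    simp only [hG, mem_union, mem_diff, mem_singleton_iff, mem_insert_iff]
    tauto
  have e6 : Xb ∩ G = Xb \ {a} := by
    ext x
    have h1 := hXb' x
    simp only [hG, mem_inter_iff, mem_diff, mem_singleton_iff, mem_insert_iff]
    tauto
  have e7 : G \ (Ya ∩ Yb) = (Xa \ {b}) ∪ (Xb \ {a}) := by
    ext x
    simp only [hG, mem_diff, mem_inter_iff, mem_union, mem_singleton_iff, mem_insert_iff]
    constructor
    · rintro ⟨⟨hxE, hxab⟩, hnot⟩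
      push_neg at hxab
      rcases (hmemA x).2 ⟨hxE, hxab.1⟩ with hxXa | hxYa
      · exact Or.inl ⟨hxXa, hxab.2⟩
      · rcases (hmemB x).2 ⟨hxE, hxab.2⟩ with hxXb | hxYb
        · exact Or.inr ⟨hxXb, hxab.1⟩
        · exact absurd ⟨hxYa, hxYb⟩ hnot
    · rintro (⟨hxXa, hxb⟩ | ⟨hxXb, hxa⟩)
      · exact ⟨by simpa [hG, mem_insert_iff] using sXa' ⟨hxXa, hxb⟩,
          fun h => hdA x hxXa h.1⟩
      · exact ⟨by simpa [hG, mem_insert_iff] using sXb' ⟨hxXb, hxa⟩,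
          fun h => hdB x hxXb h.2⟩
  have e8 : G \ (Xa ∩ Xb) = Ya ∪ Yb := by
    ext x
    simp only [hG, mem_diff, mem_inter_iff, mem_union, mem_singleton_iff, mem_insert_iff]
    constructor
    · rintro ⟨⟨hxE, hxab⟩, hnot⟩
      push_neg at hxab
      rcases (hmemA x).2 ⟨hxE, hxab.1⟩ with hxXa | hxYa
      · rcases (hmemB x).2 ⟨hxE, hxab.2⟩ with hxXb | hxYb
        · exact absurd ⟨hxXa, hxXb⟩ hnot
        · exact Or.inr hxYb
      · exact Or.inl hxYa
    · rintro (hxYa | hxYb)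
      · exact ⟨by simpa [hG, mem_insert_iff] using sYa hxYa, fun h => hdA x h.1 hxYa⟩
      · exact ⟨by simpa [hG, mem_insert_iff] using sYb hxYb, fun h => hdB x h.2 hxYb⟩
  have e9 : (Xa \ {b}) ∩ (Xb \ {a}) = Xa ∩ Xb := by
    ext x
    have h1 := hXa' x; have h2 := hXb' x
    simp only [mem_inter_iff, mem_diff, mem_singleton_iff]
    tauto
  have e10 : Ya ∩ (Xb \ {a}) = Xb ∩ Ya := by
    ext x
    have h1 := hYa' x
    simp only [mem_inter_iff, mem_diff, mem_singleton_iff]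
    tauto
  have e11 : (Xa \ {b}) ∩ Yb = Xa ∩ Yb := by
    ext x
    have h1 := hYb' x
    simp only [mem_inter_iff, mem_diff, mem_singleton_iff]
    tauto
  have e12 : G \ (Xa ∩ Yb) = Ya ∪ (Xb \ {a}) := by
    ext x
    simp only [hG, mem_diff, mem_inter_iff, mem_union, mem_singleton_iff, mem_insert_iff]
    constructor
    · rintro ⟨⟨hxE, hxab⟩, hnot⟩
      push_neg at hxab
      rcases (hmemA x).2 ⟨hxE, hxab.1⟩ with hxXa | hxYa
      · rcases (hmemB x).2 ⟨hxE, hxab.2⟩ with hxXb | hxYb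
        · exact Or.inr ⟨hxXb, hxab.1⟩
        · exact absurd ⟨hxXa, hxYb⟩ hnot
      · exact Or.inl hxYa
    · rintro (hxYa | ⟨hxXb, hxa⟩)
      · exact ⟨by simpa [hG, mem_insert_iff] using sYa hxYa, fun h => hdA x h.1 hxYa⟩
      · exact ⟨by simpa [hG, mem_insert_iff] using sXb' ⟨hxXb, hxa⟩,
          fun h => hdB x hxXb h.2⟩
  have e13 : G \ (Xb ∩ Ya) = (Xa \ {b}) ∪ Yb := by
    ext x
    simp only [hG, mem_diff, mem_inter_iff, mem_union, mem_singleton_iff, mem_insert_iff]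
    constructor
    · rintro ⟨⟨hxE, hxab⟩, hnot⟩
      push_neg at hxab
      rcases (hmemB x).2 ⟨hxE, hxab.2⟩ with hxXb | hxYb
      · rcases (hmemA x).2 ⟨hxE, hxab.1⟩ with hxXa | hxYa
        · exact Or.inl ⟨hxXa, hxab.2⟩
        · exact absurd ⟨hxXb, hxYa⟩ hnot
      · exact Or.inr hxYb
    · rintro (⟨hxXa, hxb⟩ | hxYb)
      · exact ⟨by simpa [hG, mem_insert_iff] using sXa' ⟨hxXa, hxb⟩,
          fun h => hdA x hxXa h.2⟩
      · exact ⟨by simpa [hG, mem_insert_iff] using sYb hxYb, fun h => hdB x h.1 hxYb⟩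
  have sYY : Ya ∩ Yb ⊆ G := inter_subset_left.trans sYa
  have sXX : Xa ∩ Xb ⊆ G := by rw [← e9]; exact inter_subset_left.trans sXa'
  have sXY : Xa ∩ Yb ⊆ G := inter_subset_right.trans sYb
  have sXbYa : Xb ∩ Ya ⊆ G := inter_subset_right.trans sYa
  -- lam equations for the exact separations
  rw [lam_mdel M {a} Xa hXaE, e1] at hLa
  rw [lam_mdel M {b} Xb hXbE, e2] at hLb
  norm_num at hLa hLb
  -- finiteness
  have hfa : mrk M (E \ {a}) ≠ ⊤ := by
    intro h
    rw [h, tsub_eq_zero_of_le le_top] at hLa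
    exact absurd hLa (by decide)
  have hfb : mrk M (E \ {b}) ≠ ⊤ := by
    intro h
    rw [h, tsub_eq_zero_of_le le_top] at hLb
    exact absurd hLb (by decide)
  have hGsub : G ⊆ E \ {a} := diff_subset_diff_right (singleton_subset_iff.2 (mem_insert a {b}))
  have hfg : mrk M G ≠ ⊤ := ne_top_of_le_ne_top hfa (mrk_mono M hGsub)
  -- submodularity instances
  have S1 := mrk_submod M Xa G
  rw [e3, e4] at S1
  have S2 := mrk_submod M Xb G
  rw [e5, e6] at S2
  have S3 := mrk_submod M Ya Yb
  have S4 := mrk_submod M (Xa \ {b}) (Xb \ {a})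
  rw [e9] at S4
  have S5 := mrk_submod M Ya (Xb \ {a})
  rw [e10] at S5
  have S6 := mrk_submod M (Xa \ {b}) Yb
  rw [e11] at S6
  have S7 := mrk_union_le M Xa Ya
  rw [hUa] at S7
  have S8 := mrk_union_le M Xb Yb
  rw [hUb] at S8
  -- subadditivity for complements in G
  have Sg1 : mrk M G ≤ mrk M (Ya ∩ Yb) + mrk M (G \ (Ya ∩ Yb)) := by
    have h := mrk_union_le M (Ya ∩ Yb) (G \ (Ya ∩ Yb))
    rwa [union_diff_cancel sYY] at h
  have Sg2 : mrk M G ≤ mrk M (Xa ∩ Xb) + mrk M (G \ (Xa ∩ Xb)) := by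
    have h := mrk_union_le M (Xa ∩ Xb) (G \ (Xa ∩ Xb))
    rwa [union_diff_cancel sXX] at h
  have Sg3 : mrk M G ≤ mrk M (Xa ∩ Yb) + mrk M (G \ (Xa ∩ Yb)) := by
    have h := mrk_union_le M (Xa ∩ Yb) (G \ (Xa ∩ Yb))
    rwa [union_diff_cancel sXY] at h
  have Sg4 : mrk M G ≤ mrk M (Xb ∩ Ya) + mrk M (G \ (Xb ∩ Ya)) := by
    have h := mrk_union_le M (Xb ∩ Ya) (G \ (Xb ∩ Ya))
    rwa [union_diff_cancel sXbYa] at h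
  rw [e7] at Sg1
  rw [e8] at Sg2
  rw [e12] at Sg3
  rw [e13] at Sg4
  -- monotonicity bounds
  have hxa := mrk_mono M hXaE
  have hya := mrk_mono M hYaE
  have hxb := mrk_mono M hXbE
  have hyb := mrk_mono M hYbE
  have hxa' := mrk_mono M sXa'
  have hxb' := mrk_mono M sXb'
  have hp1 := mrk_mono M sYY
  have hq1 := mrk_mono M sXX
  have hu1 := mrk_mono M (union_subset sYa sYb)
  have hv1 := mrk_mono M (union_subset sXa' sXb')
  have hs1 := mrk_mono M sXY
  have ht1 := mrk_mono M sXbYa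
  have hw1 := mrk_mono M (union_subset sYa sXb')
  have hz1 := mrk_mono M (union_subset sXa' sYb)
  -- rewrite the goal
  constructor
  · rw [lam_mdel M {a, b} (Ya ∩ Yb) (hG ▸ sYY), lam_mdel M {a, b} (Xa ∩ Xb) (hG ▸ sXX)]
    rw [show M.E \ ({a, b} : Set α) = G from hG.symm, e7, e8]
    exact key_arith hfg hfa hfb hxa hya hxb hyb hxa' hxb' hp1 hq1 hu1 hv1 hLa hLb S7 S8
      S1 S2 (by calc mrk M (Ya ∩ Yb) + mrk M (Ya ∪ Yb)
            + (mrk M (Xa ∩ Xb) + mrk M (Xa \ {b} ∪ Xb \ {a}))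
          = (mrk M (Ya ∪ Yb) + mrk M (Ya ∩ Yb))
            + (mrk M (Xa \ {b} ∪ Xb \ {a}) + mrk M (Xa ∩ Xb)) := by ring
        _ ≤ mrk M Ya + mrk M Yb + (mrk M (Xa \ {b}) + mrk M (Xb \ {a})) := add_le_add S3 S4)
      Sg1 Sg2
  · rw [lam_mdel M {a, b} (Xa ∩ Yb) (hG ▸ sXY), lam_mdel M {a, b} (Xb ∩ Ya) (hG ▸ sXbYa)]
    rw [show M.E \ ({a, b} : Set α) = G from hG.symm, e12, e13]
    exact key_arith hfg hfa hfb hxa hya hxb hyb hxa' hxb' hs1 ht1 hz1 hw1 hLa hLb S7 S8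
      S1 S2 (by calc mrk M (Xa ∩ Yb) + mrk M (Xa \ {b} ∪ Yb)
            + (mrk M (Xb ∩ Ya) + mrk M (Ya ∪ Xb \ {a}))
          = (mrk M (Xa \ {b} ∪ Yb) + mrk M (Xa ∩ Yb))
            + (mrk M (Ya ∪ Xb \ {a}) + mrk M (Xb ∩ Ya)) := by ring
        _ ≤ mrk M (Xa \ {b}) + mrk M Yb + (mrk M Ya + mrk M (Xb \ {a})) := add_le_add S6 S5
        _ = mrk M Ya + mrk M Yb + (mrk M (Xa \ {b}) + mrk M (Xb \ {a})) := by ring)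
      Sg3 Sg4
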